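/- A simple connected graph Γ has adjacency matrix rank 3 over ℝ if and only if Γ is obtained from K_3 by multiplication of vertices, i.e., Γ is a complete tripartite graph K_{a,b,c} with a, b, c ≥ 1. -/

import Mathlib

open SimpleGraph Matrix Finset Module Submodule Set

private lemma rank_submatrix_le_gen {l m o p : Type*} [Fintype l] [Fintype m] [Fintype o]
    [Fintype p] [DecidableEq m] [DecidableEq o]
    (A : Matrix m o ℝ) (f : l → m) (g : p → o) :
    (A.submatrix f g).rank ≤ A.rank := by
  have h : A.submatrix f g =
      (Matrix.of fun i j => if f i = j then (1:ℝ) else 0) * A *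
        (Matrix.of fun i j => if i = g j then (1:ℝ) else 0) := by
    ext i j
    simp [Matrix.mul_apply, Finset.sum_ite_eq, Finset.sum_ite_eq', ite_and,
      Finset.mul_sum, Finset.sum_mul]
  rw [h]
  exact (Matrix.rank_mul_le_left _ _).trans (Matrix.rank_mul_le_right _ _)


open SimpleGraph

set_option maxHeartbeats 2000000 in
/-- A simple connected graph has adjacency matrix rank 3 over `ℝ` if and only if it is a
complete tripartite graph `K_{a,b,c}` with `a, b, c ≥ 1` (equivalently, it is obtained from
`K_3` by multiplication of vertices). -/
theorem stmt_19 {V : Type*} [Fintype V] [DecidableEq V] (G : SimpleGraph V)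
    [DecidableRel G.Adj] (hG : G.Connected) :
    (G.adjMatrix ℝ).rank = 3 ↔
      ∃ a : Fin 3 → ℕ, (∀ i, 0 < a i) ∧
        Nonempty (G ≃g completeMultipartiteGraph fun i => Fin (a i)) := by
  constructor
  · intro h3
    classical
    set A := G.adjMatrix ℝ with hA
    -- basic facts about A
    have hsymm : ∀ u w, A u w = A w u := by
      intro u w; simp [hA, adjMatrix_apply, adj_comm]
    have hdiag : ∀ u, A u u = 0 := by intro u; simp [hA]
    have h01 : ∀ u w, A u w = 0 ∨ A u w = 1 := by
      intro u w
      by_cases h : G.Adj u w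
      · right; simp [hA, h]
      · left; simp [hA, h]
    have hAdj1 : ∀ u w, G.Adj u w ↔ A u w = 1 := by
      intro u w
      by_cases h : G.Adj u w <;> simp [hA, h]
    -- extract three linearly independent rows spanning the row space
    obtain ⟨t, hsub, hspan, hli⟩ := exists_linearIndependent ℝ (Set.range A)
    have htfin : t.Finite := hli.setFinite
    haveI : Fintype t := htfin.fintype
    have hcard : t.toFinset.card = 3 := by
      rw [← finrank_span_set_eq_card hli, hspan]
      rw [Matrix.rank_eq_finrank_span_row] at h3
      exact h3
    obtain ⟨r0, r1, r2, h01', h02', h12', hteq⟩ := Finset.card_eq_three.mp hcard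
    have htset : t = {r0, r1, r2} := by
      rw [← Set.coe_toFinset t, hteq]; simp
    have hr0 : r0 ∈ Set.range A := hsub (by rw [htset]; simp)
    have hr1 : r1 ∈ Set.range A := hsub (by rw [htset]; simp)
    have hr2 : r2 ∈ Set.range A := hsub (by rw [htset]; simp)
    obtain ⟨x, hx⟩ := hr0
    obtain ⟨y, hy⟩ := hr1
    obtain ⟨z, hz⟩ := hr2
    subst hx; subst hy; subst hz
    -- linear independence of the three rows as a Fin 3 family
    have hLI3 : LinearIndependent ℝ ![A x, A y, A z] := by
      have hginj : Function.Injective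
          (fun i => (⟨![A x, A y, A z] i, by rw [htset]; fin_cases i <;> simp⟩ : t)) := by
        intro i j hij
        have hval : ![A x, A y, A z] i = ![A x, A y, A z] j := by
          simpa [Subtype.ext_iff] using hij
        fin_cases i <;> fin_cases j <;> simp at hval ⊢ <;> simp [hval] at h01' h02' h12'
      have := hli.comp _ hginj
      exact this
    have hIndep : ∀ c : Fin 3 → ℝ, (∑ i, c i • ![A x, A y, A z] i) = 0 → ∀ i, c i = 0 :=
      Fintype.linearIndependent_iff.mp hLI3
    -- every row is a combination of the three rows
    have hSpanAll : ∀ s, ∃ α : Fin 3 → ℝ,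
        ∀ w, A s w = α 0 * A x w + α 1 * A y w + α 2 * A z w := by
      intro s
      have hmem : A s ∈ span ℝ (Set.range ![A x, A y, A z]) := by
        have h1 : Set.range ![A x, A y, A z] = ({A x, A y, A z} : Set (V → ℝ)) := by
          ext w; simp [Matrix.range_cons, Matrix.range_empty]; tauto
        rw [h1, ← htset, hspan]
        exact subset_span (Set.mem_range_self s)
      obtain ⟨α, hα⟩ := (mem_span_range_iff_exists_fun ℝ).mp hmem
      refine ⟨α, fun w => ?_⟩
      have := congrFun hα w
      simpa [Fin.sum_univ_three] using this.symm
    -- key "restriction" independence: coefficients vanish if combination vanishes on x,y,z columns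
    have hBIndep : ∀ c0 c1 c2 : ℝ,
        c0 * A x x + c1 * A x y + c2 * A x z = 0 →
        c0 * A x y + c1 * A y y + c2 * A y z = 0 →
        c0 * A x z + c1 * A y z + c2 * A z z = 0 →
        c0 = 0 ∧ c1 = 0 ∧ c2 = 0 := by
      intro c0 c1 c2 e1 e2 e3
      have hzero : (∑ i, (![c0, c1, c2]) i • ![A x, A y, A z] i) = 0 := by
        funext s
        obtain ⟨α, hα⟩ := hSpanAll s
        have hx' : A x s = α 0 * A x x + α 1 * A x y + α 2 * A x z := by
          rw [hsymm x s, hα x, hsymm y x, hsymm z x]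
        have hy' : A y s = α 0 * A x y + α 1 * A y y + α 2 * A y z := by
          rw [hsymm y s, hα y, hsymm z y]
        have hz' : A z s = α 0 * A x z + α 1 * A y z + α 2 * A z z := by
          rw [hsymm z s, hα z]
        have : c0 * A x s + c1 * A y s + c2 * A z s = 0 := by
          rw [hx', hy', hz']
          linear_combination α 0 * e1 + α 1 * e2 + α 2 * e3
        simpa [Fin.sum_univ_three] using this
      have h := hIndep ![c0, c1, c2] hzero
      exact ⟨h 0, h 1, h 2⟩
    -- the triangle
    have hxy : A x y = 1 := by
      rcases h01 x y with h | h
      · exfalso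
        obtain ⟨hb, ha, -⟩ := hBIndep (A y z) (-(A x z)) 0
          (by rw [hdiag x]; linear_combination (-(A x z)) * h)
          (by rw [hdiag y]; linear_combination (A y z) * h)
          (by ring)
        have ha' : A x z = 0 := by linarith
        obtain ⟨h1, -, -⟩ := hBIndep 1 0 0
          (by rw [hdiag x]; ring) (by rw [h]; ring) (by rw [ha']; ring)
        norm_num at h1
      · exact h
    have hyz : A y z = 1 := by
      rcases h01 y z with h | h
      · exfalso
        obtain ⟨-, -, hc⟩ := hBIndep 0 (A x z) (-1)
          (by rw [hxy]; ring) (by rw [hdiag y, h]; ring) (by rw [h, hdiag z]; ring)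
        norm_num at hc
      · exact h
    have hxz : A x z = 1 := by
      rcases h01 x z with h | h
      · exfalso
        obtain ⟨-, -, hc⟩ := hBIndep (A y z) 0 (-1)
          (by rw [hdiag x, h]; ring) (by rw [hxy]; ring) (by rw [h, hdiag z]; ring)
        norm_num at hc
      · exact h
    -- every vertex has a neighbour
    have hNbr : ∀ u, ∃ w, G.Adj u w := by
      intro u
      rcases eq_or_ne u x with rfl | hux
      · exact ⟨y, (hAdj1 u y).mpr hxy⟩
      · obtain ⟨p⟩ := hG.preconnected u x
        cases p with
        | nil => exact absurd rfl hux
        | cons h q => exact ⟨_, h⟩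
    -- classification: every row equals one of the three rows
    set vv : Fin 3 → V := ![x, y, z] with hvv
    have hClass : ∀ u, ∃ i : Fin 3, A u = A (vv i) := by
      intro u
      obtain ⟨α, hα⟩ := hSpanAll u
      set c0 := α 0; set c1 := α 1; set c2 := α 2
      have hp : A u x = c1 + c2 := by
        rw [hα x, hdiag x, hsymm y x, hsymm z x, hxy, hxz]; ring
      have hq : A u y = c0 + c2 := by
        rw [hα y, hdiag y, hsymm z y, hxy, hyz]; ring
      have hr : A u z = c0 + c1 := by
        rw [hα z, hdiag z, hxz, hyz]; ring
      have h0 : c0 * A u x + c1 * A u y + c2 * A u z = 0 := by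
        have := hα u
        rw [hdiag u] at this
        rw [hsymm u x, hsymm u y, hsymm u z]
        linarith [this]
      rcases h01 u x with hpv | hpv <;> rcases h01 u y with hqv | hqv <;>
          rcases h01 u z with hrv | hrv <;> rw [hpv] at hp h0 <;> rw [hqv] at hq h0 <;>
          rw [hrv] at hr h0
      · -- (0,0,0): isolated vertex, contradiction
        exfalso
        have hc0 : c0 = 0 := by linarith
        have hc1 : c1 = 0 := by linarith
        have hc2 : c2 = 0 := by linarith
        obtain ⟨w, hw⟩ := hNbr u
        have h1 : A u w = 1 := (hAdj1 u w).mp hw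
        have h2 : A u w = 0 := by
          rw [hα w, hc0, hc1, hc2]; ring
        rw [h1] at h2; norm_num at h2
      · -- (0,0,1): contradiction
        exfalso; linarith
      · -- (0,1,0): contradiction
        exfalso; linarith
      · -- (0,1,1): row = A x
        refine ⟨0, funext fun w => ?_⟩
        have hc0 : c0 = 1 := by linarith
        have hc1 : c1 = 0 := by linarith
        have hc2 : c2 = 0 := by linarith
        rw [hα w, hc0, hc1, hc2]
        have hv : vv 0 = x := rfl
        rw [hv]; ring
      · -- (1,0,0): contradiction
        exfalso; linarith
      · -- (1,0,1): row = A y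
        refine ⟨1, funext fun w => ?_⟩
        have hc0 : c0 = 0 := by linarith
        have hc1 : c1 = 1 := by linarith
        have hc2 : c2 = 0 := by linarith
        rw [hα w, hc0, hc1, hc2]
        have hv : vv 1 = y := rfl
        rw [hv]; ring
      · -- (1,1,0): row = A z
        refine ⟨2, funext fun w => ?_⟩
        have hc0 : c0 = 0 := by linarith
        have hc1 : c1 = 0 := by linarith
        have hc2 : c2 = 1 := by linarith
        rw [hα w, hc0, hc1, hc2]
        have hv : vv 2 = z := rfl
        rw [hv]; ring
      · -- (1,1,1): contradiction
        exfalso; linarith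
    -- triangle values in vv form
    have hvvdist : ∀ i j : Fin 3, i ≠ j → A (vv i) (vv j) = 1 := by
      intro i j hij
      fin_cases i <;> fin_cases j <;>
        first
          | exact absurd rfl hij
          | simpa [hvv] using hxy
          | simpa [hvv] using hyz
          | simpa [hvv] using hxz
          | simpa [hvv] using (hsymm y x).trans hxy
          | simpa [hvv] using (hsymm z y).trans hyz
          | simpa [hvv] using (hsymm z x).trans hxz
    -- the partition function
    choose f hf using hClass
    have hfvv : ∀ i, f (vv i) = i := by
      intro i
      by_contra hne
      have h1 : A (vv i) (vv i) = A (vv (f (vv i))) (vv i) := by rw [← hf (vv i)]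
      rw [hdiag (vv i), hvvdist _ _ hne] at h1
      norm_num at h1
    have hAdjf : ∀ u w, G.Adj u w ↔ f u ≠ f w := by
      intro u w
      have hval : A u w = A (vv (f w)) (vv (f u)) := by
        rw [hf u, hsymm (vv (f u)) w, hf w]
      constructor
      · intro hadj hfe
        have h1 : A u w = 1 := (hAdj1 u w).mp hadj
        rw [hval, hfe, hdiag] at h1
        norm_num at h1
      · intro hne
        refine (hAdj1 u w).mpr ?_
        rw [hval, hvvdist _ _ (Ne.symm hne)]
    -- build the isomorphism
    refine ⟨fun i => Fintype.card {v // f v = i},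
      fun i => Fintype.card_pos_iff.mpr ⟨⟨vv i, hfvv i⟩⟩, ⟨?_⟩⟩
    refine ⟨(Equiv.sigmaFiberEquiv f).symm.trans
      (Equiv.sigmaCongrRight fun i => Fintype.equivFin {v // f v = i}), ?_⟩
    intro u w
    have hfst : ∀ v : V, (((Equiv.sigmaFiberEquiv f).symm.trans
        (Equiv.sigmaCongrRight fun i => Fintype.equivFin {v // f v = i})) v).1 = f v :=
      fun v => rfl
    simp only [completeMultipartiteGraph, comap_adj, top_adj, Equiv.coe_trans, RelIso.coe_fn_mk]
    rw [hAdjf u w]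
    constructor
    · intro h
      have := hfst u ▸ hfst w ▸ h
      exact this
    · intro h
      exact hfst u ▸ hfst w ▸ h
  · rintro ⟨a, hpos, ⟨e⟩⟩
    classical
    set H := completeMultipartiteGraph fun i => Fin (a i) with hH
    set M : Matrix (Fin 3) (Fin 3) ℝ := Matrix.of fun i j => if i = j then 0 else 1 with hM
    have hMrank : M.rank = 3 := by
      have hdet : M.det ≠ 0 := by
        rw [Matrix.det_fin_three]
        norm_num [hM, Matrix.of_apply, Fin.ext_iff]
      have : IsUnit M := by
        rw [Matrix.isUnit_iff_isUnit_det]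
        exact isUnit_iff_ne_zero.mpr hdet
      rw [Matrix.rank_of_isUnit M this]
      simp
    have hGA : G.adjMatrix ℝ = (M.submatrix Sigma.fst Sigma.fst).submatrix
        (fun v => e v) (fun v => e v) := by
      ext u v
      by_cases h : G.Adj u v
      · have : (e u).1 ≠ (e v).1 := by
          have := e.map_rel_iff.mpr h
          simpa [hH] using this
        simp [adjMatrix_apply, h, hM, this]
      · have : (e u).1 = (e v).1 := by
          by_contra hc
          exact h (e.map_rel_iff.mp (by simpa [hH] using hc))
        simp [adjMatrix_apply, h, hM, this]
    have hle : (G.adjMatrix ℝ).rank ≤ 3 := by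
      rw [hGA]
      calc ((M.submatrix Sigma.fst Sigma.fst).submatrix (fun v => e v) fun v => e v).rank
          ≤ (M.submatrix Sigma.fst Sigma.fst).rank := rank_submatrix_le_gen _ _ _
        _ ≤ M.rank := rank_submatrix_le_gen _ _ _
        _ = 3 := hMrank
    have hge : 3 ≤ (G.adjMatrix ℝ).rank := by
      set g : Fin 3 → V := fun i => e.symm ⟨i, ⟨0, hpos i⟩⟩ with hg
      have hMsub : M = (G.adjMatrix ℝ).submatrix g g := by
        ext i j
        rw [hGA]
        simp only [Matrix.submatrix_apply, hg]
        simp [Equiv.apply_symm_apply]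
      calc (3:ℕ) = M.rank := hMrank.symm
        _ ≤ (G.adjMatrix ℝ).rank := by rw [hMsub]; exact rank_submatrix_le_gen _ _ _
    omega
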